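/- Every element of the one-parameter group {exp(c·(b₁+b₃)) : c ∈ ℝ} fixes the vector (1,1,1,1) ∈ ℝ⁴; the map c ↦ exp(c·(b₁+b₃)) is an injective group homomorphism from (ℝ,+) into GL(4,ℝ); and every x in the real span of {b₁,b₂,b₃,b₄} satisfying x·(1,1,1,1) = 0 is a real scalar multiple of b₁+b₃. (Hence the stabilizer of a diagonal BPS charge vector in K* is a one-parameter subgroup isomorphic to ℝ.) -/

import Mathlib

open Matrix NormedSpace

noncomputable section

def b1 : Matrix (Fin 4) (Fin 4) ℝ := !![0,-1,0,0; 1,0,0,0; 0,0,0,1; 0,0,-1,0]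
def b2 : Matrix (Fin 4) (Fin 4) ℝ := !![0,0,-1,0; 0,0,0,-1; -1,0,0,0; 0,-1,0,0]
def b3 : Matrix (Fin 4) (Fin 4) ℝ := !![0,0,0,1; 0,0,-1,0; 0,-1,0,0; 1,0,0,0]
def b4 : Matrix (Fin 4) (Fin 4) ℝ := !![0,1,0,0; -1,0,0,0; 0,0,0,1; 0,0,-1,0]

lemma sq_zero : (b1 + b3) * (b1 + b3) = 0 := by
  ext i j
  fin_cases i <;> fin_cases j <;>
    simp [b1, b3, Matrix.mul_apply, Fin.sum_univ_four]

lemma exp_of_sq_zero (x : Matrix (Fin 4) (Fin 4) ℝ) (h : x * x = 0) :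
    exp x = 1 + x := by
  have hpow : ∀ n, 2 ≤ n → x ^ n = 0 := by
    intro n hn
    have : x ^ n = x ^ 2 * x ^ (n - 2) := by rw [← pow_add]; congr 1; omega
    rw [this, pow_two, h, zero_mul]
  rw [show exp x = ∑' n : ℕ, (n.factorial : ℝ)⁻¹ • x ^ n from congrFun (exp_eq_tsum ℝ) x]
  rw [tsum_eq_sum (s := Finset.range 2) (by
    intro n hn
    rw [hpow n (by simp at hn; omega)]
    simp)]
  simp [Finset.sum_range_succ]


lemma smul_sq_zero (c : ℝ) : (c • (b1 + b3)) * (c • (b1 + b3)) = 0 := by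
  rw [Matrix.smul_mul, Matrix.mul_smul, sq_zero]; simp

lemma expA (c : ℝ) : exp (c • (b1 + b3)) = 1 + c • (b1 + b3) :=
  exp_of_sq_zero _ (smul_sq_zero c)

lemma mulVec_zero' : (b1 + b3).mulVec ![1,1,1,1] = 0 := by
  funext i
  fin_cases i <;>
    simp [b1, b3, Matrix.mulVec, dotProduct, Fin.sum_univ_four]

/-- The one-parameter group `exp(c (b₁+b₃))` fixes `(1,1,1,1)`; `c ↦ exp(c (b₁+b₃))` is an
injective group homomorphism of `(ℝ,+)` into `GL(4,ℝ)` (its values are units, it is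
multiplicative, and it is injective); and every `x` in the span of `{b₁,b₂,b₃,b₄}` annihilating
`(1,1,1,1)` is a scalar multiple of `b₁+b₃`. -/
theorem stabilizer_of_diagonal_charge_vector :
    (∀ c : ℝ, (exp (c • (b1 + b3))).mulVec ![1,1,1,1] = ![1,1,1,1]) ∧
    (∀ c : ℝ, IsUnit (exp (c • (b1 + b3)))) ∧
    (∀ c d : ℝ, exp ((c + d) • (b1 + b3)) = exp (c • (b1 + b3)) * exp (d • (b1 + b3))) ∧
    Function.Injective (fun c : ℝ => exp (c • (b1 + b3))) ∧
    (∀ x ∈ Submodule.span ℝ ({b1, b2, b3, b4} : Set (Matrix (Fin 4) (Fin 4) ℝ)),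
      x.mulVec ![1,1,1,1] = 0 → ∃ c : ℝ, x = c • (b1 + b3)) := by
  have key : ∀ c d : ℝ, (c • (b1 + b3)) * (d • (b1 + b3)) = 0 := by
    intro c d
    rw [Matrix.smul_mul, Matrix.mul_smul, sq_zero]; simp
  refine ⟨?_, ?_, ?_, ?_, ?_⟩
  · intro c
    rw [expA, Matrix.add_mulVec, Matrix.one_mulVec, Matrix.smul_mulVec,
      mulVec_zero']
    simp
  · intro c
    refine ⟨⟨1 + c • (b1 + b3), 1 - c • (b1 + b3), ?_, ?_⟩, (expA c).symm⟩
    · rw [mul_sub, mul_one, add_mul, one_mul, key]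
      abel
    · rw [sub_mul, one_mul, mul_add, mul_one, key]
      abel
  · intro c d
    rw [expA, expA, expA, add_smul, mul_add, add_mul, add_mul, mul_one, one_mul, key]
    simp only [mul_one]
    abel
  · intro c d h
    simp only [expA] at h
    have h' : c • (b1 + b3) = d • (b1 + b3) := add_left_cancel h
    have hA : (b1 + b3) ≠ 0 := by
      intro h0
      have := congrFun (congrFun h0 0) 1
      simp [b1, b3] at this
    exact smul_left_injective ℝ hA h'
  · intro x hx hv
    simp only [Submodule.mem_span_insert, Submodule.mem_span_singleton] at hx
    obtain ⟨a, z, ⟨b, z2, ⟨c, z3, ⟨d, rfl⟩, rfl⟩, rfl⟩, rfl⟩ := hx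
    have e : ∀ i, (a • b1 + (b • b2 + (c • b3 + d • b4))).mulVec ![1,1,1,1] i = 0 :=
      fun i => congrFun hv i
    have e0 := e 0; have e1 := e 1; have e2 := e 2; have e3 := e 3
    simp [b1, b2, b3, b4, Matrix.mulVec, dotProduct, Fin.sum_univ_four,
      Matrix.add_apply, Matrix.smul_apply] at e0 e1 e2 e3
    have hd : d = 0 := by linarith
    have hb : b = 0 := by linarith
    have hc : c = a := by linarith
    exact ⟨a, by subst hd hb hc; module⟩
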